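/- Let G be the balanced caterpillar obtained from the path P_n = x_1 x_2 ⋯ x_n (n ≥ 2) by appending exactly k ≥ 1 pendant leaves to each vertex x_i. Then i(G) = Σ_{j=0}^{⌈n/2⌉} C(n+1−j, j) · 2^{(n−j)k}. -/

import Mathlib

open Finset

def indepFinsets (n j : ℕ) : Finset (Finset ℕ) :=
  (Finset.range n).powerset.filter (fun A => A.card = j ∧ ∀ a ∈ A, a + 1 ∉ A)

lemma card_indepFinsets : ∀ n j : ℕ, (indepFinsets n j).card = (n + 1 - j).choose j := by
  intro n
  induction n using Nat.strong_induction_on with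
  | _ n ih =>
    match n with
    | 0 =>
      intro j
      rcases j with _ | j
      · decide
      · rw [indepFinsets]
        simp only [Finset.range_zero, Finset.powerset_empty, Finset.filter_singleton]
        rw [if_neg (by simp)]
        simp [Nat.choose_eq_zero_of_lt (show (0+1-(j+1):ℕ) < j+1 by omega)]
    | 1 =>
      intro j
      match j with
      | 0 => decide
      | 1 => decide
      | (j+2) =>
        have h0 : (1+1-(j+2)).choose (j+2) = 0 := Nat.choose_eq_zero_of_lt (by omega)
        rw [indepFinsets, h0, Finset.card_eq_zero, Finset.filter_eq_empty_iff]
        intro A hA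
        simp only [Finset.mem_powerset] at hA
        have := Finset.card_le_card hA
        simp only [Finset.card_range] at this
        rintro ⟨hc, -⟩
        omega
    | (n+2) =>
      intro j
      set S := indepFinsets (n+2) j with hS
      have hsplit := Finset.card_filter_add_card_filter_not
        (s := S) (p := fun A => (n+1) ∈ A)
      have hnot : S.filter (fun A => ¬ (n+1) ∈ A) = indepFinsets (n+1) j := by
        ext A
        simp only [hS, indepFinsets, Finset.mem_filter, Finset.mem_powerset,
          Finset.subset_iff, Finset.mem_range]
        constructor
        · rintro ⟨⟨hsub, hc, hcond⟩, hnm⟩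
          refine ⟨fun {a} ha => ?_, hc, hcond⟩
          have h1 := hsub ha
          rcases Nat.lt_or_ge a (n+1) with h | h
          · exact h
          · exfalso
            have h2 : a = n + 1 := by omega
            subst h2
            exact hnm ha
        · rintro ⟨hsub, hc, hcond⟩
          exact ⟨⟨fun {a} ha => by have := hsub ha; omega, hc, hcond⟩,
            fun hm => by have := hsub hm; omega⟩
      rcases j with _ | j
      · have hmem : S.filter (fun A => (n+1) ∈ A) = ∅ := by
          rw [Finset.filter_eq_empty_iff]
          intro A hA hm
          simp only [hS, indepFinsets, Finset.mem_filter, Finset.mem_powerset] at hA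
          have h2 := hA.2.1
          rw [Finset.card_eq_zero] at h2
          subst h2
          simp at hm
        have e1 := ih (n+1) (by omega) 0
        rw [hmem, hnot] at hsplit
        simp only [Finset.card_empty, Nat.zero_add] at hsplit
        rw [← hsplit, e1]
        simp
      · -- main case : j+1
        have hmemcard : (S.filter (fun A => (n+1) ∈ A)).card = (indepFinsets n j).card := by
          apply Finset.card_nbij (fun A => A.erase (n+1))
          · intro A hA
            simp only [hS, indepFinsets, Finset.mem_coe, Finset.mem_filter, Finset.mem_powerset,
              Finset.subset_iff, Finset.mem_range] at hA ⊢
            obtain ⟨⟨hsub, hc, hcond⟩, hm⟩ := hA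
            refine ⟨fun {a} ha => ?_, ?_, ?_⟩
            · rw [Finset.mem_erase] at ha
              have h1 := hsub ha.2
              have h2 : a ≠ n := by
                rintro rfl
                exact hcond _ ha.2 hm
              omega
            · rw [Finset.card_erase_of_mem hm, hc]; omega
            · intro a ha
              rw [Finset.mem_erase] at ha
              intro hcontra
              exact hcond _ ha.2 (Finset.mem_of_mem_erase hcontra)
          · intro A hA B hB hAB
            simp only [Finset.coe_filter, Set.mem_setOf_eq] at hA hB
            simp only at hAB
            have : insert (n+1) (A.erase (n+1)) = insert (n+1) (B.erase (n+1)) := by rw [hAB]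
            rwa [Finset.insert_erase hA.2, Finset.insert_erase hB.2] at this
          · intro A hA
            simp only [Finset.coe_filter, Set.mem_setOf_eq, Finset.mem_coe] at hA
            simp only [indepFinsets, Finset.mem_coe, Finset.mem_filter, Finset.mem_powerset,
              Finset.subset_iff, Finset.mem_range] at hA
            obtain ⟨hsub, hc, hcond⟩ := hA
            have hnm : (n+1) ∉ A := fun h => by have := hsub h; omega
            refine ⟨insert (n+1) A, ?_, ?_⟩
            · simp only [hS, indepFinsets, Set.mem_setOf_eq, Finset.coe_filter,
                Finset.mem_filter, Finset.mem_powerset, Finset.subset_iff, Finset.mem_range]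
              refine ⟨⟨fun {a} ha => ?_, ?_, ?_⟩, Finset.mem_insert_self _ _⟩
              · rcases Finset.mem_insert.1 ha with rfl | h
                · omega
                · have := hsub h; omega
              · rw [Finset.card_insert_of_notMem hnm, hc]
              · intro a ha
                rcases Finset.mem_insert.1 ha with rfl | h
                · intro hcontra
                  rcases Finset.mem_insert.1 hcontra with h' | h'
                  · omega
                  · have := hsub h'; omega
                · intro hcontra
                  rcases Finset.mem_insert.1 hcontra with h' | h'
                  · have := hsub h; omega
                  · exact hcond _ h h'
            · simp only
              rw [Finset.erase_insert hnm]
        have e1 := ih (n+1) (by omega) (j+1)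
        have e2 := ih n (by omega) j
        rw [← hsplit, hnot, hmemcard, e1, e2]
        have harr : n + 2 + 1 - (j+1) = n + 2 - j := by omega
        rw [harr]
        rcases le_or_gt j (n+1) with h | h
        · have : n + 2 - j = (n + 1 - j) + 1 := by omega
          rw [this, Nat.choose_succ_succ]
          have h4 : n + 1 + 1 - (j+1) = n + 1 - j := by omega
          rw [h4]
        · have h1 : n + 2 - j = 0 := by omega
          have h2 : n + 1 + 1 - (j+1) = 0 := by omega
          have h3 : n + 1 - j = 0 := by omega
          rw [h1, h2, h3]
          simp [Nat.choose_eq_zero_of_lt (show 0 < j+1 by omega),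
            Nat.choose_eq_zero_of_lt (show (0:ℕ) < j by omega)]


open SimpleGraph

/-- The number of independent sets in a graph (including the empty set). -/
noncomputable def numIndepSets {V : Type*} (G : SimpleGraph V) : ℕ :=
  Nat.card {s : Set V // ∀ u ∈ s, ∀ v ∈ s, ¬ G.Adj u v}

/-- The balanced caterpillar: the path on `n` spine vertices, where each spine vertex `a`
gets `k` pendant leaves `(a, j)`. -/
def balancedCaterpillar (n k : ℕ) : SimpleGraph (Fin n ⊕ Fin n × Fin k) :=
  SimpleGraph.fromRel (fun u v =>
    (∃ a b, u = Sum.inl a ∧ v = Sum.inl b ∧ (pathGraph n).Adj a b) ∨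
    (∃ a j, u = Sum.inl a ∧ v = Sum.inr (a, j)))

section
attribute [local instance] Classical.propDecidable

variable {n k : ℕ}

lemma bc_adj_inl_inl (a b : Fin n) :
    (balancedCaterpillar n k).Adj (Sum.inl a) (Sum.inl b) ↔ (pathGraph n).Adj a b := by
  simp only [balancedCaterpillar, fromRel_adj, Sum.inl.injEq, ne_eq]
  constructor
  · rintro ⟨hne, h | h⟩
    · rcases h with ⟨a', b', h1, h2, h3⟩ | ⟨a', j, h1, h2⟩
      · cases h1; cases h2; exact h3
      · exact absurd h2 (by simp)
    · rcases h with ⟨a', b', h1, h2, h3⟩ | ⟨a', j, h1, h2⟩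
      · cases h1; cases h2; exact h3.symm
      · exact absurd h2 (by simp)
  · intro h
    exact ⟨fun he => (pathGraph n).ne_of_adj h (by exact_mod_cast he), Or.inl (Or.inl ⟨a, b, rfl, rfl, h⟩)⟩

lemma bc_adj_inl_inr (a : Fin n) (p : Fin n × Fin k) :
    (balancedCaterpillar n k).Adj (Sum.inl a) (Sum.inr p) ↔ p.1 = a := by
  simp only [balancedCaterpillar, fromRel_adj, ne_eq]
  constructor
  · rintro ⟨-, h | h⟩
    · rcases h with ⟨a', b', h1, h2, h3⟩ | ⟨a', j, h1, h2⟩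
      · exact absurd h2 (by simp)
      · cases h1; cases h2; rfl
    · rcases h with ⟨a', b', h1, h2, h3⟩ | ⟨a', j, h1, h2⟩
      · exact absurd h1 (by simp)
      · exact absurd h1 (by simp)
  · rintro rfl
    exact ⟨by simp, Or.inl (Or.inr ⟨p.1, p.2, rfl, rfl⟩)⟩

lemma bc_adj_inr_inr (p q : Fin n × Fin k) :
    ¬ (balancedCaterpillar n k).Adj (Sum.inr p) (Sum.inr q) := by
  simp only [balancedCaterpillar, fromRel_adj, ne_eq]
  rintro ⟨-, h | h⟩ <;>
    rcases h with ⟨a', b', h1, h2, h3⟩ | ⟨a', j, h1, h2⟩ <;> simp_all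

lemma numIndepSets_eq_card {V : Type*} [Fintype V] (G : SimpleGraph V) :
    numIndepSets G =
      (Finset.univ.filter (fun s : Finset V => ∀ u ∈ s, ∀ v ∈ s, ¬ G.Adj u v)).card := by
  have e : {s : Finset V // ∀ u ∈ s, ∀ v ∈ s, ¬ G.Adj u v} ≃
      {s : Set V // ∀ u ∈ s, ∀ v ∈ s, ¬ G.Adj u v} :=
    Equiv.subtypeEquiv Fintype.finsetEquivSet (fun s => by
      simp [Fintype.finsetEquivSet])
  rw [numIndepSets, ← Nat.card_congr e, Nat.card_eq_fintype_card, Fintype.card_subtype]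

lemma main_count (n k : ℕ) :
    numIndepSets (balancedCaterpillar n k) =
      ∑ A ∈ Finset.univ.filter
          (fun A : Finset (Fin n) => ∀ a ∈ A, ∀ b ∈ A, ¬ (pathGraph n).Adj a b),
        2 ^ ((n - A.card) * k) := by
  rw [numIndepSets_eq_card]
  set Aset := Finset.univ.filter
      (fun A : Finset (Fin n) => ∀ a ∈ A, ∀ b ∈ A, ¬ (pathGraph n).Adj a b) with hAset
  rw [Finset.card_eq_sum_card_fiberwise (f := Finset.toLeft) (t := Aset) ?hmap]
  case hmap =>
    intro s hs
    rw [hAset]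
    simp only [Finset.mem_coe, Finset.mem_filter, Finset.mem_univ, true_and] at hs ⊢
    intro a ha b hb
    rw [Finset.mem_toLeft] at ha hb
    have := hs _ ha _ hb
    rwa [bc_adj_inl_inl] at this
  refine Finset.sum_congr rfl fun A hA => ?_
  simp only [hAset, Finset.mem_filter, Finset.mem_univ, true_and] at hA
  have hcard : ((Aᶜ ×ˢ (Finset.univ : Finset (Fin k))).powerset).card = 2 ^ ((n - A.card) * k) := by
    rw [Finset.card_powerset, Finset.card_product, Finset.card_compl, Finset.card_univ,
      Fintype.card_fin, Fintype.card_fin]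
  rw [← hcard]
  apply Finset.card_nbij (fun s => s.toRight)
  · intro s hs
    simp only [Finset.mem_coe, Finset.mem_filter, Finset.mem_univ, true_and] at hs
    obtain ⟨hP, hL⟩ := hs
    simp only [Finset.mem_coe, Finset.mem_powerset]
    intro p hp
    rw [Finset.mem_toRight] at hp
    rw [Finset.mem_product, Finset.mem_compl]
    refine ⟨fun hmem => ?_, Finset.mem_univ _⟩
    rw [← hL, Finset.mem_toLeft] at hmem
    exact hP _ hmem _ hp ((bc_adj_inl_inr p.1 p).mpr rfl)
  · intro s hs t ht hst
    simp only [Finset.coe_filter, Set.mem_setOf_eq] at hs ht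
    simp only at hst
    have hdec : ∀ u : Finset (Fin n ⊕ Fin n × Fin k), u.toLeft.disjSum u.toRight = u := by
      intro u
      ext x
      cases x with
      | inl a => simp [Finset.mem_disjSum, Finset.mem_toLeft]
      | inr p => simp [Finset.mem_disjSum, Finset.mem_toRight]
    rw [← hdec s, ← hdec t, hs.2, ht.2, hst]
  · intro B hB
    simp only [Finset.mem_coe, Finset.mem_powerset] at hB
    refine ⟨A.disjSum B, ?_, by simp⟩
    simp only [Finset.mem_coe, Finset.mem_filter, Finset.mem_univ, true_and]
    refine ⟨fun u hu v hv => ?_, Finset.toLeft_disjSum⟩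
    cases u with
    | inl a =>
      cases v with
      | inl b =>
        rw [Finset.inl_mem_disjSum] at hu hv
        rw [bc_adj_inl_inl]
        exact hA _ hu _ hv
      | inr p =>
        rw [Finset.inl_mem_disjSum] at hu
        rw [Finset.inr_mem_disjSum] at hv
        rw [bc_adj_inl_inr]
        have := (Finset.mem_product.1 (hB hv)).1
        rw [Finset.mem_compl] at this
        rintro rfl
        exact this hu
    | inr p =>
      cases v with
      | inl b =>
        rw [Finset.inr_mem_disjSum] at hu
        rw [Finset.inl_mem_disjSum] at hv
        intro hadj
        rw [adj_comm, bc_adj_inl_inr] at hadj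
        have := (Finset.mem_product.1 (hB hu)).1
        rw [Finset.mem_compl] at this
        exact this (hadj ▸ hv)
      | inr q => exact bc_adj_inr_inr p q


lemma card_filter_indep (n j : ℕ) :
    ((Finset.univ.filter (fun A : Finset (Fin n) => ∀ a ∈ A, ∀ b ∈ A, ¬ (pathGraph n).Adj a b)).filter
      (fun A => A.card = j)).card = (indepFinsets n j).card := by
  apply Finset.card_nbij (fun A => A.map ⟨Fin.val, Fin.val_injective⟩)
  · intro A hA
    simp only [Finset.mem_coe, Finset.mem_filter, Finset.mem_univ, true_and] at hA
    obtain ⟨hind, hcard⟩ := hA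
    simp only [indepFinsets, Finset.mem_coe, Finset.mem_filter, Finset.mem_powerset]
    refine ⟨?_, ?_, ?_⟩
    · intro m hm
      simp only [Finset.mem_map, Function.Embedding.coeFn_mk] at hm
      obtain ⟨x, hx, rfl⟩ := hm
      simp [x.is_lt]
    · rw [Finset.card_map, hcard]
    · intro m hm hm1
      simp only [Finset.mem_map, Function.Embedding.coeFn_mk] at hm hm1
      obtain ⟨x, hx, rfl⟩ := hm
      obtain ⟨y, hy, hxy⟩ := hm1
      exact hind x hx y hy (pathGraph_adj.mpr (Or.inl hxy.symm))
  · exact fun A _ B _ h => Finset.map_injective _ h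
  · intro B hB
    simp only [Finset.mem_coe] at hB
    simp only [indepFinsets, Finset.mem_filter, Finset.mem_powerset] at hB
    obtain ⟨hsub, hcard, hcond⟩ := hB
    have hmapeq : (Finset.univ.filter (fun x : Fin n => ↑x ∈ B)).map
        ⟨Fin.val, Fin.val_injective⟩ = B := by
      ext m
      simp only [Finset.mem_map, Finset.mem_filter, Finset.mem_univ, true_and,
        Function.Embedding.coeFn_mk]
      constructor
      · rintro ⟨x, hx, rfl⟩; exact hx
      · intro hm
        have : m < n := Finset.mem_range.1 (hsub hm)
        exact ⟨⟨m, this⟩, hm, rfl⟩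
    refine ⟨Finset.univ.filter (fun x : Fin n => ↑x ∈ B), ?_, hmapeq⟩
    simp only [Finset.mem_coe, Finset.mem_filter, Finset.mem_univ, true_and]
    refine ⟨?_, ?_⟩
    · intro a ha b hb hadj
      rcases pathGraph_adj.mp hadj with h | h
      · exact hcond _ ha (h ▸ hb)
      · exact hcond _ hb (h ▸ ha)
    · rw [← Finset.card_map (f := ⟨Fin.val, Fin.val_injective⟩), hmapeq, hcard]

theorem stmt11 (n k : ℕ) (hn : 2 ≤ n) (hk : 1 ≤ k) :
    numIndepSets (balancedCaterpillar n k) =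
      ∑ j ∈ Finset.range ((n + 1) / 2 + 1),
        (n + 1 - j).choose j * 2 ^ ((n - j) * k) := by
  rw [main_count n k]
  set Aset := Finset.univ.filter
      (fun A : Finset (Fin n) => ∀ a ∈ A, ∀ b ∈ A, ¬ (pathGraph n).Adj a b) with hAset
  rw [← Finset.sum_fiberwise_of_maps_to (g := Finset.card) (t := Finset.range (n+1))
      (fun A _ => Finset.mem_range.2 (Nat.lt_succ_of_le
        (le_trans (Finset.card_le_univ A) (by simp))))]
  have inner : ∀ j ∈ Finset.range (n+1),
      (∑ A ∈ Aset.filter (fun A => A.card = j), 2 ^ ((n - A.card) * k))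
        = (n + 1 - j).choose j * 2 ^ ((n - j) * k) := by
    intro j hj
    have hc : (∑ A ∈ Aset.filter (fun A => A.card = j), 2 ^ ((n - A.card) * k))
        = ∑ _A ∈ Aset.filter (fun A => A.card = j), 2 ^ ((n - j) * k) :=
      Finset.sum_congr rfl (fun A hA => by rw [(Finset.mem_filter.1 hA).2])
    rw [hc, Finset.sum_const, hAset, card_filter_indep, card_indepFinsets, smul_eq_mul]
  rw [Finset.sum_congr rfl inner]
  symm
  apply Finset.sum_subset
  · intro j hj
    simp only [Finset.mem_range] at hj ⊢
    omega
  · intro j hj hj2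
    simp only [Finset.mem_range] at hj hj2
    have : n + 1 - j < j := by omega
    rw [Nat.choose_eq_zero_of_lt this, Nat.zero_mul]

end
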